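/- arXiv:1806.08521 — 2 statements merged into one kernel-verified Lean document; each statement's English description precedes it below -/
import Mathlib

section
/- For a square matrix A and ρ > -1, the matrix-valued function z ↦ φ(ρ,μ;Az) satisfies the differentiation formula d/dz φ(ρ,μ;Az) = A·φ(ρ,ρ+μ;Az). -/
open MeasureTheory

/-- The Wright function `φ(ρ,μ;z) = ∑ z^k/(k! Γ(ρk+μ))`, with `1/Γ` the entire
reciprocal Gamma function (Mathlib's `Complex.Gamma` vanishes at the poles). -/
noncomputable def wright (ρ : ℝ) (μ : ℂ) (z : ℂ) : ℂ :=
  ∑' k : ℕ, ((k.factorial : ℂ) * Complex.Gamma (ρ * k + μ))⁻¹ * z ^ k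

/-- The Wright function of a matrix argument. -/
noncomputable def wrightM {n : ℕ} (ρ : ℝ) (μ : ℂ) (A : Matrix (Fin n) (Fin n) ℂ) :
    Matrix (Fin n) (Fin n) ℂ :=
  ∑' k : ℕ, ((k.factorial : ℂ) * Complex.Gamma (ρ * k + μ))⁻¹ • A ^ k

/-- Riemann–Liouville fractional integral of order `a > 0` based at `0`. -/
noncomputable def rlI (a : ℝ) (g : ℝ → ℂ) (y : ℝ) : ℂ :=
  (Real.Gamma a)⁻¹ • ∫ s in (0:ℝ)..y, ((y - s) ^ (a - 1) : ℝ) • g s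

/-- Riemann–Liouville fractional derivative of order `β ∈ (0,1)` based at `0`. -/
noncomputable def rlD (β : ℝ) (g : ℝ → ℂ) (y : ℝ) : ℂ :=
  deriv (rlI (1 - β) g) y


lemma invGamma_step (z : ℂ) : (Complex.Gamma z)⁻¹ = z * (Complex.Gamma (z + 1))⁻¹ := by
  rcases eq_or_ne z 0 with rfl | hz
  · simp [Complex.Gamma_zero]
  by_cases hpole : ∃ m : ℕ, z = -m
  · obtain ⟨m, rfl⟩ := hpole
    have hm : m ≠ 0 := by
      rintro rfl; simp at hz
    obtain ⟨m', rfl⟩ := Nat.exists_eq_succ_of_ne_zero hm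
    have h1 : (-(m' + 1 : ℕ) : ℂ) + 1 = -(m' : ℕ) := by push_cast; ring
    rw [h1, Complex.Gamma_neg_nat_eq_zero, Complex.Gamma_neg_nat_eq_zero]
    simp
  · push_neg at hpole
    have hΓ : Complex.Gamma z ≠ 0 := Complex.Gamma_ne_zero hpole
    have h := Complex.Gamma_add_one z hz
    rw [h, mul_inv]
    field_simp

lemma invGamma_sub_nat_norm (w : ℂ) (m : ℕ) :
    ‖(Complex.Gamma (w - m))⁻¹‖ ≤ (‖w‖ + m) ^ m * ‖(Complex.Gamma w)⁻¹‖ := by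
  induction m with
  | zero => simp
  | succ m ih =>
    have harg : w - (m + 1 : ℕ) + 1 = w - m := by push_cast; ring
    have h := invGamma_step (w - (m + 1 : ℕ))
    rw [harg] at h
    rw [h, norm_mul]
    have h1 : ‖w - ((m + 1 : ℕ) : ℂ)‖ ≤ ‖w‖ + (m + 1 : ℕ) := by
      calc ‖w - ((m + 1 : ℕ) : ℂ)‖ ≤ ‖w‖ + ‖((m + 1 : ℕ) : ℂ)‖ := norm_sub_le _ _
      _ = ‖w‖ + (m + 1 : ℕ) := by rw [Complex.norm_natCast]
    have h2 : (‖w‖ + m) ^ m ≤ (‖w‖ + (m + 1 : ℕ)) ^ m := by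
      apply pow_le_pow_left₀ (by positivity)
      push_cast; linarith
    calc ‖w - ((m + 1 : ℕ) : ℂ)‖ * ‖(Complex.Gamma (w - m))⁻¹‖
        ≤ (‖w‖ + (m + 1 : ℕ)) * ((‖w‖ + m) ^ m * ‖(Complex.Gamma w)⁻¹‖) := by
          apply mul_le_mul h1 ih (by positivity) (by positivity)
      _ ≤ (‖w‖ + (m + 1 : ℕ)) * ((‖w‖ + (m + 1 : ℕ)) ^ m * ‖(Complex.Gamma w)⁻¹‖) := by
          apply mul_le_mul_of_nonneg_left _ (by positivity)
          exact mul_le_mul_of_nonneg_right h2 (by positivity)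
      _ = (‖w‖ + (m + 1 : ℕ)) ^ (m + 1) * ‖(Complex.Gamma w)⁻¹‖ := by ring

lemma invGamma_add_nat_norm (w : ℂ) (hw : 1 ≤ w.re) (m : ℕ) :
    ‖(Complex.Gamma (w + m))⁻¹‖ ≤ ‖(Complex.Gamma w)⁻¹‖ := by
  induction m with
  | zero => simp
  | succ m ih =>
    have hre : 1 ≤ (w + (m : ℂ)).re := by
      simp only [Complex.add_re, Complex.natCast_re]
      linarith [Nat.cast_nonneg (α := ℝ) m]
    have hne : w + (m : ℂ) ≠ 0 := by
      intro h0
      rw [h0] at hre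
      norm_num at hre
    have hnorm : (1 : ℝ) ≤ ‖w + (m : ℂ)‖ := le_trans hre (Complex.re_le_norm _)
    have h := invGamma_step (w + (m : ℂ))
    have h2 : (Complex.Gamma (w + (m + 1 : ℕ)))⁻¹ = (w + (m : ℂ))⁻¹ * (Complex.Gamma (w + m))⁻¹ := by
      have harg : w + ((m + 1 : ℕ) : ℂ) = w + (m : ℂ) + 1 := by push_cast; ring
      rw [harg, h, ← mul_assoc, inv_mul_cancel₀ hne, one_mul]
    rw [h2, norm_mul, norm_inv]
    calc ‖w + (m : ℂ)‖⁻¹ * ‖(Complex.Gamma (w + m))⁻¹‖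
        ≤ 1 * ‖(Complex.Gamma w)⁻¹‖ := by
          apply mul_le_mul _ ih (by positivity) (by norm_num)
          rw [inv_le_one_iff₀]; right; exact hnorm
      _ = _ := one_mul _


lemma summable_majorant {q C₀ c r : ℝ} (hq0 : 0 ≤ q) (hq1 : q < 1) (hc : 1 ≤ c)
    (hC₀ : 0 ≤ C₀) (hr : 0 < r) :
    Summable (fun k : ℕ => ((k : ℝ) + 1) * r ^ k * (c * ((k : ℝ) + 1)) ^ (q * k + C₀) /
      (k.factorial : ℝ)) := by
  set E := Real.exp (q + C₀) with hE_def
  have hEpos : 0 < E := Real.exp_pos _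
  set F : ℕ → ℝ := fun k => ((k : ℝ) + 1) * r ^ k * (c * ((k : ℝ) + 1)) ^ (q * k + C₀) /
      (k.factorial : ℝ) with hF_def
  have hFpos : ∀ k, 0 < F k := by
    intro k
    apply div_pos
    · apply mul_pos (mul_pos (by positivity) (pow_pos hr k))
      apply Real.rpow_pos_of_pos
      have : (1:ℝ) ≤ c * ((k:ℝ)+1) := by nlinarith [Nat.cast_nonneg (α := ℝ) k]
      linarith
    · exact_mod_cast k.factorial_pos
  have htend : Filter.Tendsto (fun k : ℕ => ((k : ℝ) + 2) ^ (1 - q)) Filter.atTop Filter.atTop := by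
    exact (tendsto_rpow_atTop (by linarith)).comp
      (Filter.tendsto_atTop_add_const_right _ 2 tendsto_natCast_atTop_atTop)
  have hev : ∀ᶠ k : ℕ in Filter.atTop, 8 * r * E * c ^ (q:ℝ) ≤ ((k : ℝ) + 2) ^ (1 - q) :=
    htend.eventually_ge_atTop _
  apply summable_of_ratio_norm_eventually_le (r := 1/2) (by norm_num)
  filter_upwards [hev] with k hk
  rw [Real.norm_eq_abs, Real.norm_eq_abs, abs_of_nonneg (hFpos _).le,
    abs_of_nonneg (hFpos _).le]
  -- notation
  set X := (k : ℝ) + 1 with hX_def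
  set Y := (k : ℝ) + 2 with hY_def
  have hX1 : (1:ℝ) ≤ X := by rw [hX_def]; linarith [Nat.cast_nonneg (α := ℝ) k]
  have hXpos : 0 < X := by linarith
  have hYpos : 0 < Y := by rw [hY_def]; linarith [Nat.cast_nonneg (α := ℝ) k]
  set e := q * k + C₀ with he_def
  have he0 : 0 ≤ e := by positivity
  have hcX : (1:ℝ) ≤ c * X := by nlinarith
  have hcY : (0:ℝ) < c * Y := by nlinarith
  have hfac : ((k+1).factorial : ℝ) = X * (k.factorial : ℝ) := by
    rw [Nat.factorial_succ]; push_cast; ring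
  have hcast : ((k+1 : ℕ) : ℝ) + 1 = Y := by push_cast [hY_def]; ring
  have hexp : q * ((k : ℕ) + 1 : ℕ) + C₀ = e + q := by push_cast [he_def]; ring
  -- key1
  have hfactor : c * Y = (c * X) * (1 + 1/X) := by field_simp [hX_def, hY_def]; ring
  have key1 : (c * Y) ^ (e + q) ≤ ((c * X) ^ e * E) * (c ^ (q:ℝ) * Y ^ (q:ℝ)) := by
    rw [Real.rpow_add hcY]
    have h1 : (c * Y) ^ e ≤ (c * X) ^ e * E := by
      rw [hfactor, Real.mul_rpow (by positivity) (by positivity)]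
      apply mul_le_mul_of_nonneg_left _ (by positivity)
      calc (1 + 1/X) ^ e ≤ (Real.exp (1/X)) ^ e := by
            apply Real.rpow_le_rpow (by positivity) _ he0
            linarith [Real.add_one_le_exp (1/X)]
        _ = Real.exp ((1/X) * e) := by rw [← Real.exp_mul]
        _ ≤ E := by
            rw [hE_def]
            apply Real.exp_le_exp.2
            rw [one_div, inv_mul_le_iff₀ hXpos]
            nlinarith [Nat.cast_nonneg (α := ℝ) k]
    have h2 : (c * Y) ^ (q:ℝ) = c ^ (q:ℝ) * Y ^ (q:ℝ) :=
      Real.mul_rpow (by linarith) (by linarith)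
    rw [h2]
    exact mul_le_mul_of_nonneg_right h1 (by positivity)
  -- key2
  have hYX : Y = X + 1 := by rw [hX_def, hY_def]; ring
  have key2 : r * E * c ^ (q:ℝ) * (Y * Y ^ (q:ℝ)) ≤ (1/2) * X * X := by
    have hYq : Y * Y ^ (q:ℝ) = Y ^ ((1:ℝ) + q) := by
      rw [Real.rpow_add hYpos, Real.rpow_one]
    have h8 : r * E * c ^ (q:ℝ) ≤ Y ^ ((1:ℝ) - q) / 8 := by linarith
    have hmul : r * E * c ^ (q:ℝ) * Y ^ ((1:ℝ)+q) ≤ (Y ^ ((1:ℝ)-q) / 8) * Y ^ ((1:ℝ)+q) := by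
      apply mul_le_mul_of_nonneg_right h8 (by positivity)
    have hYsq : Y ^ ((1:ℝ)-q) * Y ^ ((1:ℝ)+q) = Y ^ 2 := by
      rw [← Real.rpow_add hYpos]
      norm_num
    rw [hYq]
    calc r * E * c ^ (q:ℝ) * Y ^ ((1:ℝ)+q) ≤ (Y ^ ((1:ℝ)-q) * Y ^ ((1:ℝ)+q)) / 8 := by
          rw [div_mul_eq_mul_div] at hmul; exact hmul
      _ = Y ^ 2 / 8 := by rw [hYsq]
      _ ≤ (1/2) * X * X := by rw [hYX]; nlinarith
  -- main
  show F (k+1) ≤ 1/2 * F k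
  have hkfac : (0:ℝ) < (k.factorial : ℝ) := by exact_mod_cast k.factorial_pos
  rw [hF_def]
  simp only []
  rw [hfac, hcast, hexp, ← hX_def, ← he_def]
  rw [show (1:ℝ)/2 * (X * r ^ k * (c * X) ^ e / (k.factorial:ℝ))
      = (1/2 * (X * r ^ k * (c * X) ^ e)) / (k.factorial:ℝ) from by ring]
  rw [div_le_div_iff₀ (mul_pos hXpos hkfac) hkfac]
  calc Y * r ^ (k+1) * (c * Y) ^ (e + q) * (k.factorial : ℝ)
      ≤ Y * r ^ (k+1) * (((c * X) ^ e * E) * (c ^ (q:ℝ) * Y ^ (q:ℝ))) * (k.factorial : ℝ) := by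
        have := mul_le_mul_of_nonneg_right (mul_le_mul_of_nonneg_left key1 (by positivity : (0:ℝ) ≤ Y * r ^ (k+1))) hkfac.le
        convert this using 2 <;> ring
    _ = (r * E * c ^ (q:ℝ) * (Y * Y ^ (q:ℝ))) * (r ^ k * (c * X) ^ e * (k.factorial : ℝ)) := by
        ring
    _ ≤ ((1/2) * X * X) * (r ^ k * (c * X) ^ e * (k.factorial : ℝ)) := by
        apply mul_le_mul_of_nonneg_right key2 (by positivity)
    _ = 1/2 * (X * r ^ k * (c * X) ^ e) * (X * (k.factorial : ℝ)) := by ring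

lemma masterSummable (ρ : ℝ) (hρ : -1 < ρ) (μ : ℂ) {r : ℝ} (hr : 0 < r) :
    Summable (fun k : ℕ =>
      ((k : ℝ) + 1) * ‖(((k.factorial : ℕ) : ℂ) * Complex.Gamma (ρ * k + μ))⁻¹‖ * r ^ k) := by
  classical
  -- lower bound for Gamma on the segment {x + μ.im * I : x ∈ [1,2]}
  have hseg : ∀ x ∈ Set.Icc (1:ℝ) 2, ∀ m : ℕ, ((x : ℂ) + μ.im * Complex.I) ≠ -m := by
    intro x hx m h
    have : ((x : ℂ) + μ.im * Complex.I).re = x := by simp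
    rw [h] at this
    simp only [Complex.neg_re, Complex.natCast_re] at this
    have := hx.1
    have hm : (0:ℝ) ≤ m := Nat.cast_nonneg m
    linarith [this]
  have hcont : ContinuousOn (fun x : ℝ => ‖Complex.Gamma ((x : ℂ) + μ.im * Complex.I)‖)
      (Set.Icc 1 2) := by
    intro x hx
    apply ContinuousAt.continuousWithinAt
    have hdiff : DifferentiableAt ℂ Complex.Gamma ((x : ℂ) + μ.im * Complex.I) :=
      Complex.differentiableAt_Gamma _ (hseg x hx)
    have hc2 : ContinuousAt (fun x : ℝ => (x : ℂ) + μ.im * Complex.I) x := by fun_prop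
    have : ContinuousAt (fun x : ℝ => Complex.Gamma ((x : ℂ) + μ.im * Complex.I)) x :=
      ContinuousAt.comp hdiff.continuousAt hc2
    exact this.norm
  obtain ⟨x₀, hx₀mem, hx₀min⟩ := isCompact_Icc.exists_isMinOn (Set.nonempty_Icc.2 (by norm_num))
    hcont
  set ε := ‖Complex.Gamma ((x₀ : ℂ) + μ.im * Complex.I)‖ with hε_def
  have hεpos : 0 < ε := by
    rw [hε_def, norm_pos_iff]
    exact Complex.Gamma_ne_zero (hseg x₀ hx₀mem)
  -- parameters
  set q : ℝ := max (-ρ) 0 with hq_def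
  have hq0 : 0 ≤ q := le_max_right _ _
  have hq1 : q < 1 := by
    rw [hq_def]
    apply max_lt (by linarith) (by norm_num)
  set a : ℝ := 2 + ‖μ‖ with ha_def
  have ha2 : 2 ≤ a := by rw [ha_def]; linarith [norm_nonneg μ]
  set c : ℝ := 2 * a + 1 with hc_def
  have hc1 : 1 ≤ c := by rw [hc_def]; linarith
  -- per-k bound
  have key : ∀ k : ℕ,
      ‖(((k.factorial : ℕ) : ℂ) * Complex.Gamma (ρ * k + μ))⁻¹‖ ≤
      ε⁻¹ * ((c * ((k:ℝ)+1)) ^ (q * k + a) / (k.factorial : ℝ)) := by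
    intro k
    set s : ℂ := (ρ : ℂ) * k + μ with hs_def
    have hsre : s.re = ρ * k + μ.re := by simp [hs_def]
    have hsim : s.im = μ.im := by simp [hs_def]
    set d : ℤ := 1 - ⌊s.re⌋ with hd_def
    set w : ℂ := s + d with hw_def
    have hwre : w.re = s.re + d := by simp [hw_def]
    have hwim : w.im = μ.im := by simp [hw_def, hsim]
    have hw1 : 1 ≤ w.re := by
      rw [hwre, hd_def]
      push_cast
      linarith [Int.floor_le s.re]
    have hw2 : w.re ≤ 2 := by
      rw [hwre, hd_def]
      push_cast
      linarith [Int.lt_floor_add_one s.re]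
    -- the ε bound at w
    have hwrepr : w = ((w.re : ℝ) : ℂ) + (μ.im : ℂ) * Complex.I := by
      rw [← hwim]
      exact (Complex.re_add_im w).symm
    have hεw : ‖(Complex.Gamma w)⁻¹‖ ≤ ε⁻¹ := by
      rw [norm_inv]
      apply inv_anti₀ hεpos
      have := hx₀min (Set.mem_Icc.2 ⟨hw1, hw2⟩)
      rw [hε_def]
      calc ‖Complex.Gamma ((x₀:ℂ) + μ.im * Complex.I)‖
          ≤ ‖Complex.Gamma ((w.re:ℂ) + μ.im * Complex.I)‖ := this
        _ = ‖Complex.Gamma w‖ := by rw [← hwrepr]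
    set M : ℕ := d.toNat with hM_def
    -- unified bound
    have hGbound : ‖(Complex.Gamma s)⁻¹‖ ≤ ε⁻¹ * (‖w‖ + M) ^ M := by
      rcases le_or_gt d 0 with hd0 | hd0
      · have hM0 : M = 0 := by rw [hM_def]; omega
        have hcast : ((-d).toNat : ℂ) = -(d : ℂ) := by
          have : ((-d).toNat : ℤ) = -d := Int.toNat_of_nonneg (by omega)
          exact_mod_cast congrArg (Int.cast : ℤ → ℂ) this
        have hs_eq : s = w + ((-d).toNat : ℕ) := by
          rw [hw_def, hcast]; ring
        rw [hs_eq, hM0, pow_zero, mul_one]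
        exact le_trans (invGamma_add_nat_norm w hw1 _) hεw
      · have hcast : ((M : ℕ) : ℂ) = (d : ℂ) := by
          have : ((M : ℕ) : ℤ) = d := Int.toNat_of_nonneg (by omega)
          exact_mod_cast congrArg (Int.cast : ℤ → ℂ) this
        have hs_eq : s = w - (M : ℕ) := by
          rw [hw_def, hcast]; ring
        rw [hs_eq, mul_comm]
        exact le_trans (invGamma_sub_nat_norm w M)
          (mul_le_mul_of_nonneg_left hεw (by positivity))
    -- numeric bounds
    have hwnorm : ‖w‖ ≤ a := by
      rw [ha_def]
      calc ‖w‖ ≤ |w.re| + |w.im| := Complex.norm_le_abs_re_add_abs_im w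
        _ ≤ 2 + ‖μ‖ := by
            have h1 : |w.re| ≤ 2 := abs_le.2 ⟨by linarith, hw2⟩
            have h2 : |w.im| ≤ ‖μ‖ := by rw [hwim]; exact Complex.abs_im_le_norm μ
            linarith
    have hMle : (M : ℝ) ≤ a + q * k := by
      rcases le_or_gt d 0 with hd0 | hd0
      · have hM0 : M = 0 := by rw [hM_def]; omega
        rw [hM0]
        push_cast
        positivity
      · have : (M : ℝ) = (d : ℝ) := by
          rw [hM_def]
          exact_mod_cast congrArg (Int.cast : ℤ → ℝ) (Int.toNat_of_nonneg (by omega))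
        rw [this, hd_def]
        push_cast
        have h1 : s.re - 1 ≤ (⌊s.re⌋ : ℝ) := by linarith [Int.lt_floor_add_one s.re]
        have h2 : -μ.re ≤ ‖μ‖ := by
          calc -μ.re ≤ |μ.re| := neg_le_abs _
            _ ≤ ‖μ‖ := Complex.abs_re_le_norm μ
        have hq' : -ρ ≤ q := by rw [hq_def]; exact le_max_left _ _
        have h3' : -ρ * (k:ℝ) ≤ q * k :=
          mul_le_mul_of_nonneg_right hq' (Nat.cast_nonneg k)
        rw [hsre] at h1 ⊢
        rw [ha_def]
        linarith
    have hbase : ‖w‖ + (M:ℝ) ≤ c * ((k:ℝ)+1) := by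
      rw [hc_def]
      have hk0 : (0:ℝ) ≤ k := Nat.cast_nonneg k
      have : q ≤ 1 := le_of_lt hq1
      nlinarith
    have hpow : (‖w‖ + M) ^ M ≤ (c * ((k:ℝ)+1)) ^ (q * k + a) := by
      have h1 : ((‖w‖ + M) : ℝ) ^ M ≤ (c * ((k:ℝ)+1)) ^ M := by
        apply pow_le_pow_left₀ (by positivity) hbase
      have h2 : (c * ((k:ℝ)+1)) ^ M = (c * ((k:ℝ)+1)) ^ ((M : ℝ)) := by
        rw [Real.rpow_natCast]
      have hbase1 : (1:ℝ) ≤ c * ((k:ℝ)+1) := by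
        have hk0 : (0:ℝ) ≤ k := Nat.cast_nonneg k
        nlinarith
      have h3 : (c * ((k:ℝ)+1)) ^ ((M:ℝ)) ≤ (c * ((k:ℝ)+1)) ^ (q * k + a) := by
        apply Real.rpow_le_rpow_of_exponent_le hbase1
        linarith
      calc ((‖w‖ + M) : ℝ) ^ M ≤ (c * ((k:ℝ)+1)) ^ M := h1
        _ = (c * ((k:ℝ)+1)) ^ ((M:ℝ)) := h2
        _ ≤ _ := h3
    -- assemble
    have hnormsplit : ‖(((k.factorial : ℕ) : ℂ) * Complex.Gamma s)⁻¹‖ =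
        (k.factorial : ℝ)⁻¹ * ‖(Complex.Gamma s)⁻¹‖ := by
      rw [mul_inv, norm_mul, norm_inv, Complex.norm_natCast]
    rw [hnormsplit]
    have hεinv : (0:ℝ) ≤ ε⁻¹ := by positivity
    calc (k.factorial : ℝ)⁻¹ * ‖(Complex.Gamma s)⁻¹‖
        ≤ (k.factorial : ℝ)⁻¹ * (ε⁻¹ * (c * ((k:ℝ)+1)) ^ (q * k + a)) := by
          apply mul_le_mul_of_nonneg_left _ (by positivity)
          exact hGbound.trans (mul_le_mul_of_nonneg_left hpow hεinv)
      _ = ε⁻¹ * ((c * ((k:ℝ)+1)) ^ (q * k + a) / (k.factorial : ℝ)) := by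
          rw [div_eq_mul_inv]; ring
  -- conclude by comparison
  have hbig : Summable (fun k : ℕ => ε⁻¹ *
      (((k : ℝ) + 1) * r ^ k * (c * ((k : ℝ) + 1)) ^ (q * k + a) / (k.factorial : ℝ))) :=
    (summable_majorant hq0 hq1 hc1 (by linarith) hr).mul_left _
  apply Summable.of_nonneg_of_le _ _ hbig
  · intro k
    positivity
  · intro k
    have := key k
    have hk1 : (0:ℝ) ≤ (k:ℝ) + 1 := by positivity
    have hrk : (0:ℝ) ≤ r ^ k := by positivity
    calc ((k : ℝ) + 1) * ‖(((k.factorial : ℕ) : ℂ) * Complex.Gamma ((ρ:ℂ) * k + μ))⁻¹‖ * r ^ k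
        ≤ ((k : ℝ) + 1) * (ε⁻¹ * ((c * ((k:ℝ)+1)) ^ (q * k + a) / (k.factorial : ℝ))) * r ^ k := by
          apply mul_le_mul_of_nonneg_right (mul_le_mul_of_nonneg_left (key k) hk1) hrk
      _ = ε⁻¹ * (((k : ℝ) + 1) * r ^ k * (c * ((k : ℝ) + 1)) ^ (q * k + a) / (k.factorial : ℝ)) := by
          rw [div_eq_mul_inv, div_eq_mul_inv]; ring


lemma entry_bound {n : ℕ} (A : Matrix (Fin n) (Fin n) ℂ) :
    ∃ C : ℝ, 1 ≤ C ∧ ∀ (k : ℕ) (i j : Fin n), ‖(A ^ k) i j‖ ≤ C ^ k := by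
  classical
  set a : ℝ := 1 + ∑ p : Fin n × Fin n, ‖A p.1 p.2‖ with ha_def
  have ha1 : 1 ≤ a := by
    rw [ha_def]
    have : (0:ℝ) ≤ ∑ p : Fin n × Fin n, ‖A p.1 p.2‖ :=
      Finset.sum_nonneg fun p _ => norm_nonneg _
    linarith
  have haA : ∀ i j, ‖A i j‖ ≤ a := by
    intro i j
    rw [ha_def]
    have h := Finset.single_le_sum (f := fun p : Fin n × Fin n => ‖A p.1 p.2‖)
      (fun p _ => norm_nonneg _) (Finset.mem_univ (i, j))
    simp only at h
    linarith
  refine ⟨(n + 1) * a, by nlinarith [Nat.cast_nonneg (α := ℝ) n], ?_⟩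
  intro k
  induction k with
  | zero =>
    intro i j
    simp only [pow_zero, Matrix.one_apply]
    split <;> simp
  | succ k ih =>
    intro i j
    rw [pow_succ, Matrix.mul_apply]
    calc ‖∑ x, (A ^ k) i x * A x j‖ ≤ ∑ x, ‖(A ^ k) i x * A x j‖ := norm_sum_le _ _
      _ ≤ ∑ _x : Fin n, ((n + 1 : ℝ) * a) ^ k * a := by
          apply Finset.sum_le_sum
          intro x _
          rw [norm_mul]
          exact mul_le_mul (ih i x) (haA x j) (norm_nonneg _) (by positivity)
      _ = n * (((n + 1 : ℝ) * a) ^ k * a) := by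
          rw [Finset.sum_const, Finset.card_univ, Fintype.card_fin]; simp [nsmul_eq_mul]
      _ ≤ ((n + 1 : ℝ) * a) ^ (k + 1) := by
          rw [pow_succ]
          have hC : (0:ℝ) ≤ ((n + 1 : ℝ) * a) ^ k := by positivity
          have hn : (n:ℝ) ≤ n + 1 := by linarith
          nlinarith [Nat.cast_nonneg (α := ℝ) n]

theorem wrightM_deriv {n : ℕ} (ρ : ℝ) (hρ : -1 < ρ) (μ : ℂ)
    (A : Matrix (Fin n) (Fin n) ℂ) (z : ℂ) (i j : Fin n) :
    deriv (fun w : ℂ => wrightM ρ μ (w • A) i j) z =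
      (A * wrightM ρ ((ρ : ℂ) + μ) (z • A)) i j := by
  classical
  obtain ⟨C, hC1, hC⟩ := entry_bound A
  have hz1 : (1:ℝ) ≤ ‖z‖ + 1 := by linarith [norm_nonneg z]
  -- generic term bound
  have hterm : ∀ (ν : ℂ) (w : ℂ) (R : ℝ) (hR : ‖w‖ ≤ R) (k : ℕ) (i' j' : Fin n),
      ‖((k.factorial : ℂ) * Complex.Gamma (ρ * k + ν))⁻¹ * (A ^ k) i' j' * w ^ k‖ ≤
      ((k : ℝ) + 1) * ‖((k.factorial : ℂ) * Complex.Gamma (ρ * k + ν))⁻¹‖ * (C * (R+1)) ^ k := by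
    intro ν w R hR k i' j'
    have hR0 : (0:ℝ) ≤ R := le_trans (norm_nonneg w) hR
    rw [norm_mul, norm_mul, norm_pow]
    calc ‖((k.factorial : ℂ) * Complex.Gamma (ρ * k + ν))⁻¹‖ * ‖(A ^ k) i' j'‖ * ‖w‖ ^ k
        ≤ ‖((k.factorial : ℂ) * Complex.Gamma (ρ * k + ν))⁻¹‖ * C ^ k * (R+1) ^ k := by
          gcongr
          · exact hC k i' j'
          · linarith
      _ ≤ ((k : ℝ) + 1) * ‖((k.factorial : ℂ) * Complex.Gamma (ρ * k + ν))⁻¹‖ * (C * (R+1)) ^ k := by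
          rw [mul_pow]
          have h1 : (1:ℝ) ≤ (k:ℝ) + 1 := by linarith [Nat.cast_nonneg (α := ℝ) k]
          nlinarith [norm_nonneg (((k.factorial : ℂ) * Complex.Gamma (ρ * k + ν))⁻¹),
            pow_nonneg (le_trans zero_le_one hC1) k, pow_nonneg (by linarith : (0:ℝ) ≤ R+1) k,
            mul_nonneg (norm_nonneg (((k.factorial : ℂ) * Complex.Gamma (ρ * k + ν))⁻¹))
              (mul_nonneg (pow_nonneg (le_trans zero_le_one hC1) k)
                (pow_nonneg (by linarith : (0:ℝ) ≤ R+1) k))]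
  have hCR : ∀ R : ℝ, 0 ≤ R → (0:ℝ) < C * (R+1) := by
    intro R hR; nlinarith
  -- summability of entries
  have hsum_entry : ∀ (ν : ℂ) (w : ℂ) (i' j' : Fin n),
      Summable (fun k : ℕ =>
        ((k.factorial : ℂ) * Complex.Gamma (ρ * k + ν))⁻¹ * (A ^ k) i' j' * w ^ k) := by
    intro ν w i' j'
    apply Summable.of_norm
    apply Summable.of_nonneg_of_le (fun k => norm_nonneg _)
      (fun k => hterm ν w ‖w‖ le_rfl k i' j')
    exact masterSummable ρ hρ ν (hCR ‖w‖ (norm_nonneg w))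
  -- matrix summability
  have hsum_mat : ∀ (ν : ℂ) (w : ℂ),
      Summable (fun k : ℕ => ((k.factorial : ℂ) * Complex.Gamma (ρ * k + ν))⁻¹ • (w • A) ^ k) := by
    intro ν w
    apply Pi.summable.2; intro i'; apply Pi.summable.2; intro j'
    have hentry : ∀ k : ℕ,
        (((k.factorial : ℂ) * Complex.Gamma (ρ * k + ν))⁻¹ • (w • A) ^ k) i' j' =
        ((k.factorial : ℂ) * Complex.Gamma (ρ * k + ν))⁻¹ * (A ^ k) i' j' * w ^ k := by
      intro k
      rw [smul_pow, Matrix.smul_apply, Matrix.smul_apply, smul_eq_mul, smul_eq_mul]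
      ring
    rw [show (fun k : ℕ => (((k.factorial : ℂ) * Complex.Gamma (ρ * k + ν))⁻¹ • (w • A) ^ k) i' j')
        = fun k : ℕ => ((k.factorial : ℂ) * Complex.Gamma (ρ * k + ν))⁻¹ * (A ^ k) i' j' * w ^ k
        from funext hentry]
    exact hsum_entry ν w i' j'
  -- entry formula
  have entry_formula : ∀ (ν : ℂ) (w : ℂ) (i' j' : Fin n),
      wrightM ρ ν (w • A) i' j' =
      ∑' k : ℕ, ((k.factorial : ℂ) * Complex.Gamma (ρ * k + ν))⁻¹ * (A ^ k) i' j' * w ^ k := by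
    intro ν w i' j'
    rw [wrightM]; erw [tsum_apply (hsum_mat ν w), tsum_apply (Pi.summable.1 (hsum_mat ν w) i')]
    apply tsum_congr
    intro k
    rw [smul_pow, Matrix.smul_apply, Matrix.smul_apply, smul_eq_mul, smul_eq_mul]
    ring
  -- derivative-term bound helper
  have hbnd : ∀ (w : ℂ), ‖w‖ ≤ ‖z‖ + 1 → ∀ k : ℕ,
      ‖((k.factorial : ℂ) * Complex.Gamma (ρ * k + μ))⁻¹ * (A ^ k) i j *
        ((k : ℂ) * w ^ (k - 1))‖ ≤
      ((k : ℝ) + 1) * ‖((k.factorial : ℂ) * Complex.Gamma (ρ * k + μ))⁻¹‖ *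
        (C * ((‖z‖+1)+1)) ^ k := by
    intro w hwR k
    have hxx : ‖((k.factorial : ℂ) * Complex.Gamma (ρ * k + μ))⁻¹ * (A ^ k) i j *
        ((k : ℂ) * w ^ (k - 1))‖ =
        ‖((k.factorial : ℂ) * Complex.Gamma (ρ * k + μ))⁻¹‖ * ‖(A ^ k) i j‖ *
          ((k : ℝ) * ‖w‖ ^ (k - 1)) := by
      rw [norm_mul, norm_mul, norm_mul, norm_pow, Complex.norm_natCast]
    rw [hxx]
    have h1 : ‖(A ^ k) i j‖ ≤ C ^ k := hC k i j
    have h2 : ‖w‖ ^ (k-1) ≤ (‖z‖+1) ^ (k-1) := pow_le_pow_left₀ (norm_nonneg _) hwR _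
    have h3 : (‖z‖+1) ^ (k-1) ≤ (‖z‖+1) ^ k := pow_le_pow_right₀ hz1 (Nat.sub_le k 1)
    have h4 : (‖z‖+1) ^ k ≤ ((‖z‖+1)+1) ^ k := pow_le_pow_left₀ (by linarith) (by linarith) k
    have h5 : (k : ℝ) ≤ (k : ℝ) + 1 := by linarith
    have hCpos : (0:ℝ) < C := lt_of_lt_of_le zero_lt_one hC1
    have step2 : (k : ℝ) * ‖w‖ ^ (k-1) ≤ ((k : ℝ) + 1) * ((‖z‖+1)+1) ^ k :=
      mul_le_mul h5 (le_trans (h2.trans h3) h4) (by positivity) (by positivity)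
    calc ‖((k.factorial : ℂ) * Complex.Gamma (ρ * k + μ))⁻¹‖ * ‖(A ^ k) i j‖ *
          ((k : ℝ) * ‖w‖ ^ (k - 1))
        ≤ ‖((k.factorial : ℂ) * Complex.Gamma (ρ * k + μ))⁻¹‖ * C ^ k *
          (((k : ℝ) + 1) * ((‖z‖+1)+1) ^ k) :=
          mul_le_mul (mul_le_mul_of_nonneg_left h1 (norm_nonneg _)) step2
            (by positivity) (by positivity)
      _ = ((k : ℝ) + 1) * ‖((k.factorial : ℂ) * Complex.Gamma (ρ * k + μ))⁻¹‖ *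
          (C * ((‖z‖+1)+1)) ^ k := by rw [mul_pow]; ring
  -- derivative of the series
  have hderiv : HasDerivAt (fun w : ℂ => ∑' k : ℕ,
      ((k.factorial : ℂ) * Complex.Gamma (ρ * k + μ))⁻¹ * (A ^ k) i j * w ^ k)
      (∑' k : ℕ, ((k.factorial : ℂ) * Complex.Gamma (ρ * k + μ))⁻¹ * (A ^ k) i j *
        ((k : ℂ) * z ^ (k - 1))) z := by
    have hmem : z ∈ Metric.ball (0:ℂ) (‖z‖+1) :=
      mem_ball_zero_iff.2 (by linarith [norm_nonneg z] : ‖z‖ < ‖z‖ + 1)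
    exact hasDerivAt_tsum_of_isPreconnected
      (masterSummable ρ hρ μ (hCR (‖z‖+1) (by linarith [norm_nonneg z])))
      Metric.isOpen_ball ((convex_ball (0:ℂ) (‖z‖+1)).isPreconnected)
      (fun k w _ => HasDerivAt.const_mul _ (hasDerivAt_pow k w))
      (fun k w hw => hbnd w (le_of_lt (mem_ball_zero_iff.1 hw)) k)
      hmem (hsum_entry μ z i j) hmem
  -- rewrite the function being differentiated
  have hfun : (fun w : ℂ => wrightM ρ μ (w • A) i j) = fun w : ℂ => ∑' k : ℕ,
      ((k.factorial : ℂ) * Complex.Gamma (ρ * k + μ))⁻¹ * (A ^ k) i j * w ^ k :=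
    funext fun w => entry_formula μ w i j
  rw [hfun, hderiv.deriv]
  -- now compute both sides as series
  -- LHS reindex
  have hsumg' : Summable (fun k : ℕ =>
      ((k.factorial : ℂ) * Complex.Gamma (ρ * k + μ))⁻¹ * (A ^ k) i j *
        ((k : ℂ) * z ^ (k - 1))) := by
    apply Summable.of_norm
    apply Summable.of_nonneg_of_le (fun k => norm_nonneg _) _
      (masterSummable ρ hρ μ (hCR (‖z‖+1) (by linarith [norm_nonneg z])))
    intro k
    exact hbnd z (by linarith) k
  rw [Summable.tsum_eq_zero_add hsumg']
  simp only [Nat.cast_zero, zero_mul, mul_zero, zero_add]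
  -- RHS
  rw [Matrix.mul_apply]
  have hW : ∀ x : Fin n, wrightM ρ ((ρ : ℂ) + μ) (z • A) x j =
      ∑' k : ℕ, ((k.factorial : ℂ) * Complex.Gamma (ρ * k + ((ρ:ℂ) + μ)))⁻¹ * (A ^ k) x j * z ^ k :=
    fun x => entry_formula ((ρ:ℂ) + μ) z x j
  have hRHS : ∑ x : Fin n, A i x * wrightM ρ ((ρ:ℂ) + μ) (z • A) x j =
      ∑ x : Fin n, ∑' k : ℕ, A i x *
        (((k.factorial : ℂ) * Complex.Gamma (ρ * k + ((ρ:ℂ) + μ)))⁻¹ * (A ^ k) x j * z ^ k) := by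
    apply Finset.sum_congr rfl
    intro x _
    rw [hW x]
    exact (tsum_mul_left).symm
  rw [hRHS, ← Summable.tsum_finsetSum (fun x _ => (hsum_entry ((ρ:ℂ)+μ) z x j).mul_left (A i x))]
  apply tsum_congr
  intro k
  have hsum_x : ∑ x : Fin n, A i x *
      (((k.factorial : ℂ) * Complex.Gamma (ρ * k + ((ρ:ℂ) + μ)))⁻¹ * (A ^ k) x j * z ^ k) =
      ((k.factorial : ℂ) * Complex.Gamma (ρ * k + ((ρ:ℂ) + μ)))⁻¹ * z ^ k * ((A * A ^ k) i j) := by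
    rw [Matrix.mul_apply, Finset.mul_sum]
    apply Finset.sum_congr rfl
    intro x _
    ring
  rw [hsum_x, ← pow_succ']
  -- key coefficient identity
  have hne : ((k : ℂ) + 1) ≠ 0 := Nat.cast_add_one_ne_zero k
  have harg : ((ρ:ℂ) * ((k+1 : ℕ) : ℂ) + μ) = (ρ:ℂ) * (k : ℂ) + ((ρ:ℂ) + μ) := by
    push_cast; ring
  have hcd : (((k+1).factorial : ℂ) * Complex.Gamma (ρ * (k+1 : ℕ) + μ))⁻¹ * ((k+1 : ℕ) : ℂ) =
      ((k.factorial : ℂ) * Complex.Gamma (ρ * k + ((ρ:ℂ) + μ)))⁻¹ := by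
    rw [harg, Nat.factorial_succ]
    push_cast
    rw [show (((k:ℂ) + 1) * (k.factorial : ℂ)) *
        Complex.Gamma ((ρ:ℂ) * (k : ℂ) + ((ρ:ℂ) + μ)) =
        ((k:ℂ) + 1) * ((k.factorial : ℂ) * Complex.Gamma ((ρ:ℂ) * (k : ℂ) + ((ρ:ℂ) + μ)))
        from by ring, mul_inv]
    rw [mul_comm (((k:ℂ)+1)⁻¹) _, mul_assoc, inv_mul_cancel₀ hne, mul_one]
  have hk1 : ((k : ℕ) + 1 : ℕ) - 1 = k := by omega
  rw [hk1]
  push_cast at hcd ⊢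
  linear_combination ((A ^ (k+1)) i j * z ^ k) * hcd
end

section
/- For an r×r Jordan block J(λ) with eigenvalue λ, the matrix Wright function φ(ρ,μ;J(λ)z) is the upper-triangular Toeplitz matrix whose (i,j)-entry for j ≥ i is (z^{j-i}/(j-i)!)·φ(ρ, μ+ρ(j-i); λz). -/
open MeasureTheory

section Aux

open Filter

set_option maxHeartbeats 1000000

lemma norm_cGamma_le (z : ℂ) (hz : 0 < z.re) : ‖Complex.Gamma z‖ ≤ Real.Gamma z.re := by
  rw [Complex.Gamma_eq_integral hz, Real.Gamma_eq_integral hz, Complex.GammaIntegral]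
  refine norm_integral_le_of_norm_le (Real.GammaIntegral_convergent hz) ?_
  filter_upwards [ae_restrict_mem measurableSet_Ioi] with x hx
  rw [norm_mul, Complex.norm_cpow_eq_rpow_re_of_pos hx, Complex.norm_real, Real.norm_eq_abs,
    abs_of_pos (Real.exp_pos _)]
  simp [Complex.sub_re]

lemma norm_sin_le (w : ℂ) : ‖Complex.sin w‖ ≤ Real.exp |w.im| := by
  rw [Complex.sin]
  calc ‖(Complex.exp (-w * Complex.I) - Complex.exp (w * Complex.I)) * Complex.I / 2‖
      = ‖Complex.exp (-w * Complex.I) - Complex.exp (w * Complex.I)‖ / 2 := by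
        simp [norm_div, norm_mul]
    _ ≤ (‖Complex.exp (-w * Complex.I)‖ + ‖Complex.exp (w * Complex.I)‖) / 2 := by
        gcongr; exact norm_sub_le _ _
    _ ≤ (Real.exp |w.im| + Real.exp |w.im|) / 2 := by
        gcongr <;>
        · rw [Complex.norm_exp]
          apply Real.exp_le_exp.2
          simp [Complex.mul_re]
          cases abs_cases w.im <;> linarith [le_abs_self w.im, neg_abs_le w.im]
    _ = Real.exp |w.im| := by ring

lemma gamma_gautschi {y a : ℝ} (hy : 1 ≤ y) (h0 : 0 ≤ a) (h1 : a ≤ 1) :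
    Real.Gamma (y + a) ≤ Real.Gamma y * y ^ a := by
  have hy0 : (0:ℝ) < y := by linarith
  have hΓy : 0 < Real.Gamma y := Real.Gamma_pos_of_pos hy0
  have hΓya : 0 < Real.Gamma (y + a) := Real.Gamma_pos_of_pos (by linarith)
  have hc := Real.convexOn_log_Gamma.2 (Set.mem_Ioi.2 hy0) (Set.mem_Ioi.2 (by linarith : (0:ℝ) < y + 1))
    (by linarith : (0:ℝ) ≤ 1 - a) h0 (by ring)
  have harg : (1 - a) • y + a • (y + 1) = y + a := by simp; ring
  rw [harg] at hc
  simp only [Function.comp_apply, smul_eq_mul] at hc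
  have hΓy1 : Real.Gamma (y + 1) = y * Real.Gamma y := Real.Gamma_add_one (ne_of_gt hy0)
  rw [hΓy1, Real.log_mul (ne_of_gt hy0) (ne_of_gt hΓy)] at hc
  have : Real.log (Real.Gamma (y + a)) ≤ Real.log (Real.Gamma y * y ^ a) := by
    rw [Real.log_mul (ne_of_gt hΓy) (by positivity), Real.log_rpow hy0]
    nlinarith [hc]
  exact (Real.log_le_log_iff hΓya (by positivity)).1 this

lemma summable_gamma_fac {a : ℝ} (b : ℝ) {x : ℝ} (ha0 : 0 < a) (ha1 : a < 1) (hx : 0 ≤ x) :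
    Summable (fun k : ℕ => Real.Gamma (a * k + b) * x ^ k / k.factorial) := by
  apply summable_of_ratio_norm_eventually_le (r := 1/2) (by norm_num)
  have t1 : Tendsto (fun n : ℕ => (n:ℝ)) atTop atTop := tendsto_natCast_atTop_atTop
  have t2 : Tendsto (fun n : ℕ => (n:ℝ) ^ (1 - a)) atTop atTop :=
    (tendsto_rpow_atTop (by linarith)).comp t1
  filter_upwards [t1.eventually_ge_atTop ((1 - b)/a), t1.eventually_ge_atTop (b/(1-a)),
    t2.eventually_ge_atTop (2*x), t1.eventually_ge_atTop 1] with n h1 h2 h3 h4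
  set y : ℝ := a * n + b with hy
  have hy1 : 1 ≤ y := by
    rw [div_le_iff₀ ha0] at h1; rw [hy]; linarith
  have hyn : y ≤ n := by
    rw [div_le_iff₀ (by linarith : (0:ℝ) < 1 - a)] at h2; rw [hy]; nlinarith
  have hn0 : (0:ℝ) < n := by linarith
  have hΓy : 0 < Real.Gamma y := Real.Gamma_pos_of_pos (by linarith)
  have key : Real.Gamma (a * (n+1) + b) ≤ Real.Gamma y * y ^ a := by
    have : a * (n+1) + b = y + a := by rw [hy]; ring
    rw [this]
    exact gamma_gautschi hy1 ha0.le ha1.le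
  have hya : y ^ a * x ≤ (n + 1) / 2 := by
    have hy0 : (0:ℝ) < y := by linarith
    have h5 : y ^ a ≤ (n:ℝ) ^ a := Real.rpow_le_rpow hy0.le hyn ha0.le
    have h6 : (n:ℝ) ^ a * x ≤ (n:ℝ) ^ a * ((n:ℝ) ^ (1-a) / 2) := by
      have : (0:ℝ) ≤ (n:ℝ)^a := by positivity
      nlinarith
    have h7 : (n:ℝ) ^ a * (n:ℝ) ^ (1-a) = n := by
      rw [← Real.rpow_add hn0]; norm_num
    have h8 : (n:ℝ)^a * x ≤ n / 2 := by
      calc (n:ℝ)^a * x ≤ (n:ℝ) ^ a * ((n:ℝ) ^ (1-a) / 2) := h6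
        _ = n / 2 := by rw [mul_div_assoc'] at *; rw [h7]
    have h9 : y ^ a * x ≤ (n:ℝ)^a * x := by
      apply mul_le_mul_of_nonneg_right h5 hx
    linarith
  rw [Real.norm_eq_abs, Real.norm_eq_abs,
    abs_of_nonneg (by positivity : (0:ℝ) ≤ Real.Gamma (a * ↑n + b) * x ^ n / ↑n.factorial),
    abs_of_nonneg]
  · have hfac : (Nat.factorial (n+1) : ℝ) = (n+1) * n.factorial := by
      rw [Nat.factorial_succ]; push_cast; ring
    rw [hfac]
    have hfn : (0:ℝ) < n.factorial := by positivity
    rw [div_le_iff₀ (by positivity)]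
    calc Real.Gamma (a * ↑(n+1) + b) * x ^ (n+1)
        ≤ (Real.Gamma y * y ^ a) * (x * x ^ n) := by
          rw [pow_succ, mul_comm (x ^ n) x]
          push_cast
          apply mul_le_mul key le_rfl (by positivity) (by positivity)
      _ = (y ^ a * x) * (Real.Gamma y * x ^ n) := by ring
      _ ≤ ((n+1)/2) * (Real.Gamma y * x ^ n) := by
          apply mul_le_mul_of_nonneg_right hya (by positivity)
      _ = 1 / 2 * (Real.Gamma (a * ↑n + b) * x ^ n / ↑n.factorial) * ((↑n + 1) * ↑n.factorial) := by
          rw [hy]; field_simp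
  · have : 0 < Real.Gamma (a * ↑(n+1) + b) := by
      apply Real.Gamma_pos_of_pos; push_cast; nlinarith
    positivity

lemma gammaInv_strip_bound (t : ℝ) :
    ∃ C : ℝ, ∀ z : ℂ, z.im = t → 1 ≤ z.re → ‖(Complex.Gamma z)⁻¹‖ ≤ C := by
  set g : ℝ → ℝ := fun x => ‖(Complex.Gamma (x + t * Complex.I))⁻¹‖ with hg
  have hgc : ContinuousOn g (Set.Icc 1 2) := by
    apply Continuous.continuousOn
    exact (Complex.differentiable_one_div_Gamma.continuous.comp
      (by continuity : Continuous fun x : ℝ => (x : ℂ) + t * Complex.I)).norm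
  obtain ⟨x0, _, hx0⟩ := isCompact_Icc.exists_isMaxOn ⟨1, by norm_num⟩ hgc
  refine ⟨g x0, ?_⟩
  have key : ∀ n : ℕ, ∀ z : ℂ, z.im = t → 1 ≤ z.re → z.re ≤ 2 + n → ‖(Complex.Gamma z)⁻¹‖ ≤ g x0 := by
    intro n
    induction n with
    | zero =>
      intro z him hre1 hre2
      have hz : z = (z.re : ℂ) + t * Complex.I := by
        rw [← him]; exact (Complex.re_add_im z).symm ▸ by
          simp [Complex.ext_iff]
      rw [hz]
      exact hx0 ⟨hre1, by simpa using hre2⟩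
    | succ n ih =>
      intro z him hre1 hre2
      by_cases h : z.re ≤ 2
      · have hz : z = (z.re : ℂ) + t * Complex.I := by
          rw [← him]; simp [Complex.ext_iff]
        rw [hz]
        exact hx0 ⟨hre1, h⟩
      · push_neg at h
        have hne : z - 1 ≠ 0 := by
          intro hzz
          have : (z - 1).re = 0 := by rw [hzz]; simp
          simp [Complex.sub_re] at this
          linarith
        have hGam : Complex.Gamma z = (z - 1) * Complex.Gamma (z - 1) := by
          have := Complex.Gamma_add_one (z - 1) hne
          rw [sub_add_cancel] at this
          exact this
        rw [hGam, mul_inv, norm_mul]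
        have h1 : ‖(z - 1)⁻¹‖ ≤ 1 := by
          rw [norm_inv]
          rw [inv_le_one_iff₀]
          right
          calc (1:ℝ) ≤ (z-1).re := by simp [Complex.sub_re]; linarith
            _ ≤ ‖z-1‖ := Complex.re_le_norm _
        have h2 : ‖(Complex.Gamma (z-1))⁻¹‖ ≤ g x0 := by
          apply ih (z-1) (by simp [Complex.sub_im, him]) (by simp [Complex.sub_re]; linarith)
            (by simp [Complex.sub_re]; push_cast at hre2 ⊢; linarith)
        calc ‖(z-1)⁻¹‖ * ‖(Complex.Gamma (z-1))⁻¹‖ ≤ 1 * g x0 := by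
              apply mul_le_mul h1 h2 (norm_nonneg _) zero_le_one
          _ = g x0 := one_mul _
  intro z him hre
  exact key ⌈z.re⌉₊ z him hre (by
    calc z.re ≤ ⌈z.re⌉₊ := Nat.le_ceil _
      _ ≤ 2 + ⌈z.re⌉₊ := by linarith)

lemma gammaInv_bounded_of_nonneg {ρ : ℝ} (hρ : 0 ≤ ρ) (μ : ℂ) :
    ∃ C : ℝ, ∀ k : ℕ, ‖(Complex.Gamma ((ρ : ℂ) * k + μ))⁻¹‖ ≤ C := by
  obtain ⟨C0, hC0⟩ := gammaInv_strip_bound μ.im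
  have him : ∀ k : ℕ, ((ρ : ℂ) * k + μ).im = μ.im := by intro k; simp
  have hre : ∀ k : ℕ, ((ρ : ℂ) * k + μ).re = ρ * k + μ.re := by intro k; simp
  rcases eq_or_lt_of_le hρ with h0 | h0
  · refine ⟨‖(Complex.Gamma μ)⁻¹‖, fun k => ?_⟩
    rw [← h0]
    simp
  · set N := ⌈(1 - μ.re) / ρ⌉₊ with hN
    refine ⟨max C0 ((Finset.range (N + 1)).sup' (by simp)
      (fun k => ‖(Complex.Gamma ((ρ : ℂ) * k + μ))⁻¹‖)), fun k => ?_⟩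
    by_cases hk : 1 ≤ ρ * k + μ.re
    · exact le_trans (hC0 _ (him k) (by rw [hre]; exact hk)) (le_max_left _ _)
    · push_neg at hk
      have hkN : k ≤ N := by
        have : (k : ℝ) ≤ (1 - μ.re) / ρ := by
          rw [le_div_iff₀ h0]; nlinarith
        calc k = ⌈(k:ℝ)⌉₊ := by simp
          _ ≤ N := Nat.ceil_le_ceil this
      exact le_trans (Finset.le_sup' (fun k : ℕ => ‖(Complex.Gamma ((ρ : ℂ) * k + μ))⁻¹‖)
        (Finset.mem_range.2 (by omega : k < N + 1))) (le_max_right _ _)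

lemma wright_summable (ρ : ℝ) (hρ : -1 < ρ) (μ w : ℂ) :
    Summable (fun k : ℕ => ((k.factorial : ℂ) * Complex.Gamma ((ρ : ℝ) * k + μ))⁻¹ * w ^ k) := by
  have hnorm : ∀ k : ℕ, ‖((k.factorial : ℂ) * Complex.Gamma ((ρ : ℝ) * k + μ))⁻¹ * w ^ k‖
      = ‖(Complex.Gamma ((ρ:ℂ) * k + μ))⁻¹‖ * ‖w‖ ^ k / k.factorial := by
    intro k
    rw [mul_inv, norm_mul, norm_mul, norm_inv, norm_pow]
    have : ‖((k.factorial : ℕ) : ℂ)‖ = (k.factorial : ℝ) := by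
      rw [Complex.norm_natCast]
    rw [this]
    ring
  rcases le_or_gt 0 ρ with h0 | h0
  · obtain ⟨C, hC⟩ := gammaInv_bounded_of_nonneg h0 μ
    apply Summable.of_norm
    refine Summable.of_nonneg_of_le (fun k => norm_nonneg _) (fun k => ?_)
      ((Real.summable_pow_div_factorial ‖w‖).mul_left C)
    · rw [hnorm k]
      have h1 := hC k
      have h2 : (0:ℝ) ≤ ‖w‖ ^ k / k.factorial := by positivity
      calc ‖(Complex.Gamma ((ρ:ℂ) * k + μ))⁻¹‖ * ‖w‖ ^ k / k.factorial
          = ‖(Complex.Gamma ((ρ:ℂ) * k + μ))⁻¹‖ * (‖w‖ ^ k / k.factorial) := by ring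
        _ ≤ C * (‖w‖ ^ k / k.factorial) := mul_le_mul_of_nonneg_right h1 h2
  · -- ρ < 0
    set a : ℝ := -ρ with ha
    have ha0 : 0 < a := by linarith
    have ha1 : a < 1 := by linarith
    set b : ℝ := 1 - μ.re with hb
    set Cs : ℝ := Real.exp (|Real.pi * μ.im|) / Real.pi with hCs
    apply Summable.of_norm
    apply Summable.of_norm_bounded_eventually
      (g := fun k : ℕ => Cs * (Real.Gamma (a * k + b) * ‖w‖ ^ k / k.factorial))
    · exact ((summable_gamma_fac b ha0 ha1 (norm_nonneg w)).mul_left Cs)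
    · rw [Nat.cofinite_eq_atTop]
      have t1 : Tendsto (fun n : ℕ => (n:ℝ)) atTop atTop := tendsto_natCast_atTop_atTop
      filter_upwards [t1.eventually_ge_atTop (μ.re / a)] with k hk
      have hre1 : 1 ≤ a * k + b := by
        rw [div_le_iff₀ ha0] at hk
        rw [hb]; linarith
      set s : ℂ := (ρ:ℂ) * k + μ with hs
      have hsre : s.re = ρ * k + μ.re := by simp [hs]
      have hsim : s.im = μ.im := by simp [hs]
      have h1sre : (1 - s).re = a * k + b := by simp [Complex.sub_re, hsre, hb, ha]; ring
      have hΓ1s_pos : 0 < Real.Gamma (a * k + b) := Real.Gamma_pos_of_pos (by linarith)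
      have hCs0 : 0 < Cs := by
        rw [hCs]; positivity
      rw [norm_norm, hnorm k]
      have key : ‖(Complex.Gamma s)⁻¹‖ ≤ Cs * Real.Gamma (a * k + b) := by
        by_cases hzero : Complex.Gamma s = 0
        · rw [hzero, inv_zero, norm_zero]
          positivity
        · have h1s_ne : Complex.Gamma (1 - s) ≠ 0 := by
            apply Complex.Gamma_ne_zero
            intro m hm
            have : (1 - s).re = -(m:ℝ) := by rw [hm]; simp
            rw [h1sre] at this
            have : (0:ℝ) ≤ (m:ℝ) := by positivity
            linarith
          have hsin_ne : Complex.sin (Real.pi * s) ≠ 0 := by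
            intro hsin
            have := Complex.Gamma_mul_Gamma_one_sub s
            rw [hsin] at this
            simp at this
            rcases this with h | h
            · exact hzero h
            · exact h1s_ne h
          have hpi : (Real.pi : ℂ) ≠ 0 := by
            simp [Real.pi_ne_zero]
          have hrefl : (Complex.Gamma s)⁻¹
              = Complex.sin (Real.pi * s) * Complex.Gamma (1 - s) / Real.pi := by
            have h := Complex.Gamma_mul_Gamma_one_sub s
            rw [eq_div_iff hsin_ne] at h
            refine inv_eq_of_mul_eq_one_right ?_
            field_simp
            linear_combination h
          rw [hrefl]
          rw [norm_div, norm_mul]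
          have hnpi : ‖(Real.pi : ℂ)‖ = Real.pi := by
            rw [Complex.norm_real, Real.norm_eq_abs, abs_of_pos Real.pi_pos]
          rw [hnpi]
          have b1 : ‖Complex.sin ((Real.pi:ℂ) * s)‖ ≤ Real.exp |Real.pi * μ.im| := by
            have := norm_sin_le ((Real.pi:ℂ) * s)
            have him : ((Real.pi:ℂ) * s).im = Real.pi * μ.im := by
              simp [Complex.mul_im, hsim]
            rwa [him] at this
          have b2 : ‖Complex.Gamma (1 - s)‖ ≤ Real.Gamma (a * k + b) := by
            have := norm_cGamma_le (1 - s) (by rw [h1sre]; linarith)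
            rwa [h1sre] at this
          rw [hCs, div_mul_eq_mul_div]
          gcongr
      calc ‖(Complex.Gamma ((ρ:ℂ) * ↑k + μ))⁻¹‖ * ‖w‖ ^ k / ↑k.factorial
          ≤ (Cs * Real.Gamma (a * ↑k + b)) * ‖w‖ ^ k / ↑k.factorial := by
            gcongr
        _ = Cs * (Real.Gamma (a * ↑k + b) * ‖w‖ ^ k / ↑k.factorial) := by ring

lemma shift_pow {r : ℕ} (N : Matrix (Fin r) (Fin r) ℂ)
    (hN : ∀ i j : Fin r, N i j = if (i:ℕ)+1 = (j:ℕ) then 1 else 0) (m : ℕ) (i j : Fin r) :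
    (N ^ m) i j = if (i:ℕ) + m = (j:ℕ) then 1 else 0 := by
  induction m generalizing j with
  | zero => simp [Matrix.one_apply, Fin.ext_iff, eq_comm]
  | succ m ih =>
    rw [pow_succ, Matrix.mul_apply]
    by_cases h : (i:ℕ) + m < r
    · rw [Finset.sum_eq_single (⟨(i:ℕ) + m, h⟩ : Fin r)]
      · rw [ih, hN]
        simp [Nat.add_assoc]
      · intro l _ hl
        rw [ih]
        rw [if_neg, zero_mul]
        intro hc
        exact hl (Fin.ext hc.symm)
      · intro hc
        exact absurd (Finset.mem_univ _) hc
    · push_neg at h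
      rw [Finset.sum_eq_zero, if_neg]
      · intro hc
        have := j.isLt
        omega
      · intro l _
        rw [ih, if_neg, zero_mul]
        intro hc
        have := l.isLt
        omega

lemma jordan_pow_entry {r : ℕ} (lam z : ℂ) {J : Matrix (Fin r) (Fin r) ℂ}
    (hJ : ∀ i j : Fin r, J i j =
      if i = j then lam else if (i : ℕ) + 1 = (j : ℕ) then 1 else 0)
    (k : ℕ) (i j : Fin r) :
    ((z • J) ^ k) i j = if (i:ℕ) ≤ (j:ℕ) then
      (k.choose ((j:ℕ)-(i:ℕ)) : ℂ) * lam ^ (k - ((j:ℕ)-(i:ℕ))) * z ^ k else 0 := by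
  classical
  set N : Matrix (Fin r) (Fin r) ℂ :=
    Matrix.of (fun i j : Fin r => if (i:ℕ)+1 = (j:ℕ) then (1:ℂ) else 0) with hNdef
  have hN : ∀ i j : Fin r, N i j = if (i:ℕ)+1 = (j:ℕ) then 1 else 0 := fun i j => rfl
  have hsplit : z • J = (z * lam) • (1 : Matrix (Fin r) (Fin r) ℂ) + z • N := by
    ext a b
    simp only [Matrix.smul_apply, Matrix.add_apply, Matrix.one_apply, hJ, hN, smul_eq_mul]
    by_cases h1 : a = b
    · have : ¬ ((a:ℕ)+1 = (b:ℕ)) := by subst h1; omega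
      simp [h1, this]
    · have : ¬ ((a:ℕ) = (b:ℕ)) := fun hc => h1 (Fin.ext hc)
      by_cases h2 : (a:ℕ)+1 = (b:ℕ) <;> simp [h1, h2]
  have hc : Commute ((z * lam) • (1 : Matrix (Fin r) (Fin r) ℂ)) (z • N) :=
    ((Commute.one_left N).smul_left (z*lam)).smul_right z
  have hpow : (z • J) ^ k
      = ∑ m ∈ Finset.range (k+1),
          ((z*lam) ^ m * z ^ (k-m) * (k.choose m : ℂ)) • N ^ (k-m) := by
    rw [hsplit, hc.add_pow]
    refine Finset.sum_congr rfl (fun m _ => ?_)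
    simp only [smul_pow, one_pow, smul_mul_assoc, one_mul, mul_smul_comm, smul_smul]
    rw [← (Nat.cast_commute (k.choose m) (N ^ (k-m))).eq, ← nsmul_eq_mul,
      ← Nat.cast_smul_eq_nsmul ℂ, smul_smul]
    congr 1
    ring
  rw [hpow, Matrix.sum_apply]
  simp only [Matrix.smul_apply, shift_pow N hN, smul_eq_mul]
  set d : ℕ := (j:ℕ) - (i:ℕ) with hd
  by_cases hij : (i:ℕ) ≤ (j:ℕ)
  · rw [if_pos hij]
    by_cases hdk : d ≤ k
    · rw [Finset.sum_eq_single (k - d)]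
      · have h1 : k - (k - d) = d := by omega
        have h2 : (i:ℕ) + d = j := by omega
        rw [h1, if_pos h2, mul_one, Nat.choose_symm hdk, mul_pow]
        have hz : z ^ (k-d) * z ^ d = z ^ k := by rw [← pow_add]; congr 1; omega
        linear_combination (lam ^ (k-d) * (k.choose d : ℂ)) * hz
      · intro m hm hmne
        rw [if_neg, mul_zero]
        intro hcon
        have hmk : m ≤ k := by
          have := Finset.mem_range.1 hm; omega
        have : k - m = d := by omega
        omega
      · intro hc
        exact absurd (Finset.mem_range.2 (by omega)) hc
    · push_neg at hdk
      rw [Nat.choose_eq_zero_of_lt hdk]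
      rw [Finset.sum_eq_zero]
      · simp
      · intro m hm
        rw [if_neg, mul_zero]
        intro hcon
        have hmk : m ≤ k := by have := Finset.mem_range.1 hm; omega
        omega
  · rw [if_neg hij]
    rw [Finset.sum_eq_zero]
    intro m hm
    rw [if_neg, mul_zero]
    intro hcon
    omega

lemma key_hasSum (ρ : ℝ) (hρ : -1 < ρ) (μ lam z : ℂ) (d : ℕ) :
    HasSum (fun k : ℕ => ((k.factorial : ℂ) * Complex.Gamma ((ρ : ℝ) * k + μ))⁻¹ *
        ((k.choose d : ℂ) * lam ^ (k - d) * z ^ k))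
      (z ^ d / (d.factorial : ℂ) * wright ρ (μ + (ρ : ℂ) * (d : ℂ)) (lam * z)) := by
  set μ' : ℂ := μ + (ρ : ℂ) * (d : ℂ) with hμ'
  have hg : HasSum (fun k : ℕ => ((k.factorial : ℂ) * Complex.Gamma ((ρ : ℝ) * k + μ'))⁻¹ *
      (lam * z) ^ k) (wright ρ μ' (lam * z)) := (wright_summable ρ hρ μ' (lam * z)).hasSum
  have hmul := hg.mul_left (z ^ d / (d.factorial : ℂ))
  set f : ℕ → ℂ := fun k => ((k.factorial : ℂ) * Complex.Gamma ((ρ : ℝ) * k + μ))⁻¹ *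
      ((k.choose d : ℂ) * lam ^ (k - d) * z ^ k) with hf
  have heq : (fun n : ℕ => z ^ d / (d.factorial : ℂ) *
      (((n.factorial : ℂ) * Complex.Gamma ((ρ : ℝ) * n + μ'))⁻¹ * (lam * z) ^ n))
      = fun n => f (n + d) := by
    funext n
    rw [hf]
    have e1 : ((ρ : ℂ)) * ((n + d : ℕ) : ℂ) + μ = (ρ : ℂ) * n + μ' := by
      rw [hμ']; push_cast; ring
    have e2 : n + d - d = n := by omega
    have e3 : (((n + d).choose d : ℂ)) * (d.factorial : ℂ) * (n.factorial : ℂ)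
        = (((n + d).factorial : ℕ) : ℂ) := by
      have := Nat.choose_mul_factorial_mul_factorial (Nat.le_add_left d n)
      rw [Nat.add_sub_cancel] at this
      exact_mod_cast congrArg (Nat.cast : ℕ → ℂ) this
    simp only [e1, e2]
    have hd0 : ((d.factorial : ℕ) : ℂ) ≠ 0 := Nat.cast_ne_zero.2 (Nat.factorial_ne_zero _)
    have hn0 : ((n.factorial : ℕ) : ℂ) ≠ 0 := Nat.cast_ne_zero.2 (Nat.factorial_ne_zero _)
    have hch : (((n + d).choose d : ℕ) : ℂ) ≠ 0 :=
      Nat.cast_ne_zero.2 (Nat.choose_pos (Nat.le_add_left d n)).ne'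
    rw [mul_inv, mul_inv, ← e3]
    set t : ℂ := (Complex.Gamma ((ρ:ℂ) * n + μ'))⁻¹ with ht
    field_simp [hd0, hn0, hch]
    ring
  rw [heq] at hmul
  have h2 : ∑ i ∈ Finset.range d, f i = 0 := by
    apply Finset.sum_eq_zero
    intro i hi
    rw [hf]
    have : i.choose d = 0 := Nat.choose_eq_zero_of_lt (Finset.mem_range.1 hi)
    simp [this]
  have h3 := (hasSum_nat_add_iff (f := f) d).mp hmul
  rwa [h2, add_zero] at h3

end Aux

set_option maxHeartbeats 1000000 in
theorem wrightM_jordan_block (r : ℕ) (ρ : ℝ) (hρ : -1 < ρ) (μ : ℂ) (lam : ℂ)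
    (J : Matrix (Fin r) (Fin r) ℂ)
    (hJ : ∀ i j : Fin r, J i j =
      if i = j then lam else if (i : ℕ) + 1 = (j : ℕ) then 1 else 0)
    (z : ℂ) (i j : Fin r) :
    wrightM ρ μ (z • J) i j =
      if (i : ℕ) ≤ (j : ℕ) then
        z ^ ((j : ℕ) - (i : ℕ)) / (((j : ℕ) - (i : ℕ)).factorial : ℂ) *
          wright ρ (μ + (ρ : ℂ) * (((j : ℕ) - (i : ℕ) : ℕ) : ℂ)) (lam * z)
      else 0 := by
  classical
  set T : Matrix (Fin r) (Fin r) ℂ := Matrix.of (fun i j : Fin r =>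
    if (i : ℕ) ≤ (j : ℕ) then
      z ^ ((j : ℕ) - (i : ℕ)) / (((j : ℕ) - (i : ℕ)).factorial : ℂ) *
        wright ρ (μ + (ρ : ℂ) * (((j : ℕ) - (i : ℕ) : ℕ) : ℂ)) (lam * z)
    else 0) with hT
  have hentry : ∀ i j : Fin r, HasSum
      (fun k : ℕ => (((k.factorial : ℂ) * Complex.Gamma (ρ * k + μ))⁻¹ • ((z • J) ^ k)) i j)
      (T i j) := by
    intro i j
    have hfun : (fun k : ℕ => (((k.factorial : ℂ) * Complex.Gamma (ρ * k + μ))⁻¹ • ((z • J) ^ k)) i j)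
        = fun k : ℕ => ((k.factorial : ℂ) * Complex.Gamma (ρ * k + μ))⁻¹ *
            (if (i:ℕ) ≤ (j:ℕ) then
              ((k.choose ((j:ℕ)-(i:ℕ)) : ℂ)) * lam ^ (k - ((j:ℕ)-(i:ℕ))) * z ^ k else 0) := by
      funext k
      rw [Matrix.smul_apply, smul_eq_mul, jordan_pow_entry lam z hJ k i j]
    rw [hfun]
    by_cases hij : (i:ℕ) ≤ (j:ℕ)
    · simp only [if_pos hij]
      have hTij : T i j = z ^ ((j:ℕ) - (i:ℕ)) / (((j:ℕ) - (i:ℕ)).factorial : ℂ) *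
          wright ρ (μ + (ρ : ℂ) * ((((j:ℕ) - (i:ℕ) : ℕ)) : ℂ)) (lam * z) := by
        rw [hT]; simp only [Matrix.of_apply, if_pos hij]
      rw [hTij]
      exact key_hasSum ρ hρ μ lam z ((j:ℕ) - (i:ℕ))
    · simp only [if_neg hij, mul_zero]
      have hTij : T i j = 0 := by
        rw [hT]; simp only [Matrix.of_apply, if_neg hij]
      rw [hTij]
      exact hasSum_zero
  have hmat : HasSum
      (fun k : ℕ => ((k.factorial : ℂ) * Complex.Gamma (ρ * k + μ))⁻¹ • ((z • J) ^ k)) T :=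
    Pi.hasSum.mpr fun i => Pi.hasSum.mpr fun j => hentry i j
  have hW : wrightM ρ μ (z • J) = T := by
    rw [wrightM]
    exact hmat.tsum_eq
  rw [hW, hT]
  simp only [Matrix.of_apply]
end
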